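/- Let G be a group that is not locally finite. Then there exist a finite alphabet A, a G-SFT X ⊆ A^G, a G-shift Y ⊆ (Fin 2)^G, and a factor map φ : X → Y (a continuous surjection satisfying φ(σ^g x) = σ^g(φ(x)) for all g ∈ G and x ∈ X), such that Y is not a G-SFT. That is, there exists a sofic G-shift which is not a G-SFT. -/

import Mathlib

open scoped Pointwise symmDiff

namespace LFPaper

variable {G A B : Type*}

/-- The right shift action: `(shift g x) h = x (h * g)`. -/
def shift [Group G] (g : G) (x : G → A) : G → A := fun h => x (h * g)

/-- Restriction of a configuration to a finite shape. -/
def restrictF (F : Finset G) (x : G → A) : F → A := fun a => x a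

/-- A `G`-shift space: a closed, shift-invariant subset of the full shift. -/
def IsShiftSpace [Group G] [TopologicalSpace A] (X : Set (G → A)) : Prop :=
  IsClosed X ∧ ∀ g : G, ∀ x ∈ X, shift g x ∈ X

/-- A `G`-shift of finite type: the set of configurations avoiding a finite
set of forbidden patterns on a finite shape. -/
def IsSFT [Group G] (X : Set (G → A)) : Prop :=
  ∃ (F : Finset G) (P : Set (F → A)),
    X = {x : G → A | ∀ g : G, restrictF F (shift g x) ∉ P}

/-- The `F`-language of `X`: all restrictions of elements of `X` to `F`. -/
def language (X : Set (G → A)) (F : Finset G) : Set (F → A) :=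
  {w | ∃ x ∈ X, restrictF F x = w}

/-- Strong irreducibility of a shift. -/
def StronglyIrreducible [Group G] (X : Set (G → A)) : Prop :=
  ∃ K : Finset G, ∀ (Fu Fv : Finset G) (u : Fu → A) (v : Fv → A),
    Disjoint (Fu : Set G) ((K : Set G) * (Fv : Set G)) →
    u ∈ language X Fu → v ∈ language X Fv →
    ∃ x ∈ X, restrictF Fu x = u ∧ restrictF Fv x = v

/-- The free `G`-extension of an `H`-shift `Y`: all configurations whose
restriction to every right coset of `H` (pulled back to `H`) lies in `Y`. -/
def freeExt [Group G] (H : Subgroup G) (Y : Set (H → A)) : Set (G → A) :=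
  {x : G → A | ∀ g : G, (fun h : H => x ((h : G) * g)) ∈ Y}

/-- Local finiteness of a group: every finitely generated subgroup is finite. -/
def IsLocallyFinite (G : Type*) [Group G] : Prop :=
  ∀ S : Finset G, Finite ↥(Subgroup.closure (S : Set G))

/-- A (left) Følner sequence for a countable group. -/
def IsFolner [Group G] (F : ℕ → Finset G) : Prop :=
  (∀ n, (F n).Nonempty) ∧ (∀ g : G, ∃ n, g ∈ F n) ∧
  ∀ g : G, Filter.Tendsto
    (fun n => (Set.ncard ((((fun h => g * h) '' (F n : Set G))) ∆ ((F n : Set G))) : ℝ) /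
      ((F n).card : ℝ))
    Filter.atTop (nhds 0)

/-- Cardinality of the `F`-language. -/
noncomputable def langCard (X : Set (G → A)) (F : Finset G) : ℕ :=
  (language X F).ncard

/-- A shift-commuting self-homeomorphism of `X` (an automorphism of the shift `X`). -/
def IsAutomorphism [Group G] [TopologicalSpace A] (X : Set (G → A)) (φ : Equiv.Perm X) : Prop :=
  Continuous φ ∧ Continuous φ.symm ∧
  ∀ (g : G) (x y : X), (y : G → A) = shift g (x : G → A) →
    (φ y : G → A) = shift g ((φ x : G → A))


section NotLFAux
variable {G : Type*} [Group G] [DecidableEq G]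

/-- Balls in the word metric generated by `T` (acting on the left). -/
def tball (T : Finset G) : ℕ → Finset G
  | 0 => {1}
  | n + 1 => tball T n ∪ T * tball T n

lemma tball_subset_succ (T : Finset G) (n : ℕ) : tball T n ⊆ tball T (n + 1) := by
  intro a ha; exact Finset.mem_union_left _ ha

lemma tball_mono (T : Finset G) {m n : ℕ} (h : m ≤ n) : tball T m ⊆ tball T n := by
  induction n with
  | zero => have : m = 0 := Nat.le_zero.mp h; simp [this]
  | succ n ih =>
    rcases Nat.lt_or_ge m (n + 1) with h' | h'
    · exact (ih (Nat.lt_succ_iff.mp h')).trans (tball_subset_succ T n)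
    · have : m = n + 1 := le_antisymm h h'
      simp [this]

lemma one_mem_tball (T : Finset G) (n : ℕ) : (1 : G) ∈ tball T n := by
  induction n with
  | zero => simp [tball]
  | succ n ih => exact Finset.mem_union_left _ ih

lemma mul_mem_tball {T : Finset G} :
    ∀ {m n : ℕ} {a b : G}, a ∈ tball T m → b ∈ tball T n → a * b ∈ tball T (m + n) := by
  intro m
  induction m with
  | zero =>
    intro n a b ha hb
    have : a = 1 := by simpa [tball] using ha
    simpa [this] using hb
  | succ m ih =>
    intro n a b ha hb
    rcases Finset.mem_union.mp ha with h | h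
    · exact tball_mono T (by omega) (ih h hb)
    · rcases Finset.mem_mul.mp h with ⟨t, ht, c, hc, rfl⟩
      have : c * b ∈ tball T (m + n) := ih hc hb
      have : t * (c * b) ∈ T * tball T (m + n) := Finset.mul_mem_mul ht this
      have h2 : t * (c * b) ∈ tball T (m + n + 1) := Finset.mem_union_right _ this
      have he : m + 1 + n = m + n + 1 := by omega
      rw [he]
      simpa [mul_assoc] using h2

lemma mem_tball_one {T : Finset G} {t : G} (ht : t ∈ T) : t ∈ tball T 1 := by
  have h1 : t * 1 ∈ T * tball T 0 := Finset.mul_mem_mul ht (one_mem_tball T 0)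
  have h2 : t ∈ T * tball T 0 := by simpa using h1
  have : t ∈ tball T 0 ∪ T * tball T 0 := Finset.mem_union_right _ h2
  simpa [tball] using this

lemma inv_mem_tball {T : Finset G} (hsym : ∀ t ∈ T, t⁻¹ ∈ T) :
    ∀ {n : ℕ} {a : G}, a ∈ tball T n → a⁻¹ ∈ tball T n := by
  intro n
  induction n with
  | zero =>
    intro a ha
    have : a = 1 := by simpa [tball] using ha
    simp [this, tball]
  | succ n ih =>
    intro a ha
    rcases Finset.mem_union.mp ha with h | h
    · exact tball_mono T (by omega) (ih h)
    · rcases Finset.mem_mul.mp h with ⟨t, ht, c, hc, rfl⟩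
      have h1 : c⁻¹ ∈ tball T n := ih hc
      have h2 : t⁻¹ ∈ tball T 1 := mem_tball_one (hsym t ht)
      have := mul_mem_tball h1 h2
      simpa [mul_inv_rev] using this

lemma tball_subset_closure (T : Finset G) :
    ∀ n, (tball T n : Set G) ⊆ (Subgroup.closure (T : Set G) : Set G) := by
  intro n
  induction n with
  | zero =>
    intro a ha
    have : a = 1 := by simpa [tball] using ha
    simp [this, one_mem]
  | succ n ih =>
    intro a ha
    rcases Finset.mem_union.mp ha with h | h
    · exact ih h
    · rcases Finset.mem_mul.mp h with ⟨t, ht, c, hc, rfl⟩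
      exact mul_mem (Subgroup.subset_closure ht) (ih hc)

lemma exists_tball_of_mem_closure {T : Finset G} (hsym : ∀ t ∈ T, t⁻¹ ∈ T) {g : G}
    (hg : g ∈ Subgroup.closure (T : Set G)) : ∃ n, g ∈ tball T n := by
  induction hg using Subgroup.closure_induction with
  | mem x hx => exact ⟨1, mem_tball_one hx⟩
  | one => exact ⟨0, one_mem_tball T 0⟩
  | mul x y hx hy ihx ihy =>
    obtain ⟨m, hm⟩ := ihx; obtain ⟨n, hn⟩ := ihy
    exact ⟨m + n, mul_mem_tball hm hn⟩
  | inv x hx ihx =>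
    obtain ⟨n, hn⟩ := ihx
    exact ⟨n, inv_mem_tball hsym hn⟩

lemma exists_fresh {T : Finset G} (hsym : ∀ t ∈ T, t⁻¹ ∈ T)
    (hinf : ¬ Finite ↥(Subgroup.closure (T : Set G))) (n : ℕ) :
    ∃ h, h ∈ tball T (n + 1) ∧ h ∉ tball T n := by
  by_contra hc
  push_neg at hc
  have heq : ∀ m, tball T (n + m) ⊆ tball T n := by
    intro m
    induction m with
    | zero => simp
    | succ m ih =>
      intro a ha
      rcases Finset.mem_union.mp ha with h | h
      · exact ih h
      · rcases Finset.mem_mul.mp h with ⟨t, ht, c, hcm, rfl⟩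
        exact hc _ (Finset.mem_union_right _ (Finset.mul_mem_mul ht (ih hcm)))
  have hsub : (Subgroup.closure (T : Set G) : Set G) ⊆ ↑(tball T n) := by
    intro g hg
    obtain ⟨m, hm⟩ := exists_tball_of_mem_closure hsym hg
    exact heq m (tball_mono T (by omega) hm)
  exact hinf (Set.Finite.to_subtype ((tball T n).finite_toSet.subset hsub))

lemma exists_path {T : Finset G} :
    ∀ (n : ℕ) (h : G), h ∈ tball T (n + 1) → h ∉ tball T n →
      ∃ γ : ℕ → G, γ 0 = 1 ∧ γ (n + 1) = h ∧
        (∀ k < n + 1, ∃ t ∈ T, γ (k + 1) = t * γ k) ∧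
        (∀ k ≤ n + 1, γ k ∈ tball T k) ∧
        (∀ k, 1 ≤ k → k ≤ n + 1 → γ k ∉ tball T (k - 1)) := by
  intro n
  induction n with
  | zero =>
    intro h h1 h0
    have hmul : h ∈ T * tball T 0 := by
      rcases Finset.mem_union.mp h1 with hh | hh
      · exact absurd hh h0
      · exact hh
    refine ⟨fun k => if k = 0 then 1 else h, by simp, by simp, ?_, ?_, ?_⟩
    · intro k hk
      interval_cases k
      rcases Finset.mem_mul.mp hmul with ⟨t, ht, c, hc, hrfl⟩
      have hc1 : c = 1 := by simpa [tball] using hc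
      exact ⟨t, ht, by simp [← hrfl, hc1]⟩
    · intro k hk
      interval_cases k
      · simp [tball]
      · simpa using h1
    · intro k hk1 hk2
      interval_cases k
      simpa using h0
  | succ n ih =>
    intro h h1 h0
    have hmul : h ∈ T * tball T (n + 1) := by
      rcases Finset.mem_union.mp h1 with hh | hh
      · exact absurd hh h0
      · exact hh
    rcases Finset.mem_mul.mp hmul with ⟨t, ht, c, hc, hrfl⟩
    have hc0 : c ∉ tball T n := by
      intro hcn
      exact h0 (hrfl ▸ Finset.mem_union_right _ (Finset.mul_mem_mul ht hcn))
    obtain ⟨γ, hγ0, hγn, hstep, hmem, hnot⟩ := ih c hc hc0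
    refine ⟨fun k => if k ≤ n + 1 then γ k else h, by simp [hγ0], by simp, ?_, ?_, ?_⟩
    · intro k hk
      rcases Nat.lt_or_ge k (n + 1) with h' | h'
      · obtain ⟨t', ht', he⟩ := hstep k h'
        exact ⟨t', ht', by simp [show k + 1 ≤ n + 1 by omega, show k ≤ n + 1 by omega, he]⟩
      · have : k = n + 1 := by omega
        subst this
        exact ⟨t, ht, by simp [hγn, ← hrfl]⟩
    · intro k hk
      rcases Nat.lt_or_ge k (n + 2) with h' | h'
      · have hk' : k ≤ n + 1 := by omega
        simp only [if_pos hk']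
        exact hmem k hk'
      · have : k = n + 2 := by omega
        subst this
        simp only [if_neg (by omega : ¬ (n + 2 ≤ n + 1))]
        exact h1
    · intro k hk1 hk2
      rcases Nat.lt_or_ge k (n + 2) with h' | h'
      · have hk' : k ≤ n + 1 := by omega
        simp only [if_pos hk']
        exact hnot k hk1 hk'
      · have : k = n + 2 := by omega
        subst this
        simp only [if_neg (by omega : ¬ (n + 2 ≤ n + 1))]
        simpa using h0

end NotLFAux

section NotLFAux2
variable {G : Type*} [Group G] [DecidableEq G]

/-- Encode an element of `T` (a pointer) as a nonzero letter; non-elements to `0`. -/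
noncomputable def pidx (T : Finset G) (u : G) : Fin (T.card + 1) :=
  if h : u ∈ T then (T.equivFin ⟨u, h⟩).succ else 0

lemma pidx_ne_zero {T : Finset G} {u : G} (hu : u ∈ T) : pidx T u ≠ 0 := by
  simp only [pidx, dif_pos hu]
  exact Fin.succ_ne_zero _

lemma pidx_injOn {T : Finset G} {u v : G} (hu : u ∈ T) (hv : v ∈ T)
    (h : pidx T u = pidx T v) : u = v := by
  simp only [pidx, dif_pos hu, dif_pos hv] at h
  have h2 := Fin.succ_injective _ h
  have h3 := T.equivFin.injective h2
  exact Subtype.ext_iff.mp h3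

lemma exists_pidx_eq {T : Finset G} {a : Fin (T.card + 1)} (ha : a ≠ 0) :
    ∃ u ∈ T, pidx T u = a := by
  rcases Fin.eq_succ_of_ne_zero ha with ⟨i, rfl⟩
  refine ⟨(T.equivFin.symm i : G), (T.equivFin.symm i).2, ?_⟩
  simp only [pidx, dif_pos (T.equivFin.symm i).2]
  congr 1
  have : (⟨(T.equivFin.symm i : G), (T.equivFin.symm i).2⟩ : {x // x ∈ T}) = T.equivFin.symm i :=
    Subtype.ext rfl
  rw [this, Equiv.apply_symm_apply]

/-- The matching SFT: a letter `pidx T u` at `g` is a pointer matching `g` with `u*g`,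
and the partner must point back. -/
def XP (T : Finset G) : Set (G → Fin (T.card + 1)) :=
  {x | ∀ g : G, ∀ u ∈ T, x g = pidx T u → x (u * g) = pidx T u⁻¹}

def toTwo {k : ℕ} : Fin (k + 1) → Fin 2 := fun a => if a = 0 then 0 else 1

lemma cover_lemma (T : Finset G) (hsym : ∀ t ∈ T, t⁻¹ ∈ T)
    (n : ℕ) (hn : Even n) (γ : ℕ → G)
    (hinj : ∀ j ≤ n, ∀ k ≤ n, γ j = γ k → j = k)
    (hstep : ∀ k < n, ∃ t ∈ T, γ (k + 1) = t * γ k) :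
    ∃ x ∈ XP T, ∀ g : G, toTwo (x g) = if ∃ k, k < n ∧ γ k = g then 1 else 0 := by
  classical
  have hstep' : ∀ k, ∃ t, k < n → t ∈ T ∧ γ (k + 1) = t * γ k := by
    intro k
    by_cases hk : k < n
    · rcases hstep k hk with ⟨t, ht, he⟩
      exact ⟨t, fun _ => ⟨ht, he⟩⟩
    · exact ⟨1, fun h => absurd h hk⟩
  choose tf htf using hstep'
  have htfm : ∀ k < n, tf k ∈ T := fun k hk => (htf k hk).1
  have htfe : ∀ k < n, γ (k + 1) = tf k * γ k := fun k hk => (htf k hk).2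
  set x : G → Fin (T.card + 1) := fun g =>
    if h : ∃ k, k < n ∧ γ k = g then
      (if Even h.choose then pidx T (tf h.choose) else pidx T (tf (h.choose - 1))⁻¹)
    else 0 with hx
  have huniq : ∀ (g : G) (h : ∃ k, k < n ∧ γ k = g) (k : ℕ), k < n → γ k = g → h.choose = k := by
    intro g h k hk hgk
    exact hinj _ (le_of_lt h.choose_spec.1) _ (le_of_lt hk) (h.choose_spec.2.trans hgk.symm)
  have hval : ∀ k, k < n →
      x (γ k) = if Even k then pidx T (tf k) else pidx T (tf (k - 1))⁻¹ := by
    intro k hk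
    have hex : ∃ k', k' < n ∧ γ k' = γ k := ⟨k, hk, rfl⟩
    rw [hx]
    simp only [dif_pos hex]
    rw [huniq _ hex k hk rfl]
  have hval0 : ∀ g, (¬ ∃ k, k < n ∧ γ k = g) → x g = 0 := by
    intro g hg; rw [hx]; simp only [dif_neg hg]
  refine ⟨x, ?_, ?_⟩
  · intro g u hu hxg
    have hne : x g ≠ 0 := by rw [hxg]; exact pidx_ne_zero hu
    have hex : ∃ k, k < n ∧ γ k = g := by
      by_contra hcx
      exact hne (hval0 g hcx)
    obtain ⟨k, hk, hgk⟩ := hex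
    subst hgk
    rw [hval k hk] at hxg
    by_cases heven : Even k
    · rw [if_pos heven] at hxg
      have hu' : u = tf k := pidx_injOn hu (htfm k hk) hxg.symm
      have hk1 : k + 1 < n := by
        rcases hn with ⟨r, hr⟩; rcases heven with ⟨s, hs⟩; omega
      have hmule : u * γ k = γ (k + 1) := by rw [hu', ← htfe k hk]
      rw [hmule, hval (k + 1) hk1, if_neg (by simp [Nat.even_add_one, heven])]
      simp [hu']
    · rw [if_neg heven] at hxg
      have hk1 : 1 ≤ k := Nat.pos_of_ne_zero (fun h => heven (h ▸ Even.zero))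
      have hkm : k - 1 < n := by omega
      have htm : (tf (k - 1))⁻¹ ∈ T := hsym _ (htfm _ hkm)
      have hu' : u = (tf (k - 1))⁻¹ := pidx_injOn hu htm hxg.symm
      have hgk : γ k = tf (k - 1) * γ (k - 1) := by
        have := htfe (k - 1) hkm
        rwa [show k - 1 + 1 = k by omega] at this
      have hmul : u * γ k = γ (k - 1) := by
        rw [hu', hgk, inv_mul_cancel_left]
      have hkev : Even (k - 1) := by
        rcases Nat.even_or_odd k with he | ho
        · exact absurd he heven
        · rcases ho with ⟨s, hs⟩
          exact ⟨s, by omega⟩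
      rw [hmul, hval (k - 1) hkm, if_pos hkev, hu', inv_inv]
  · intro g
    by_cases hg : ∃ k, k < n ∧ γ k = g
    · rw [if_pos hg]
      obtain ⟨k, hk, hgk⟩ := hg
      subst hgk
      rw [hval k hk]
      by_cases heven : Even k
      · rw [if_pos heven]
        simp [toTwo, pidx_ne_zero (htfm k hk)]
      · rw [if_neg heven]
        have hkm : k - 1 < n := by omega
        simp [toTwo, pidx_ne_zero (hsym _ (htfm _ hkm))]
    · rw [if_neg hg, hval0 g hg]
      simp [toTwo]

lemma even_card_of_involution {α : Type*} [DecidableEq α] (s : Finset α) :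
    ∀ f : α → α, (∀ b ∈ s, f b ∈ s) → (∀ b ∈ s, f (f b) = b) → (∀ b ∈ s, f b ≠ b) →
      Even s.card := by
  induction s using Finset.strongInductionOn with
  | _ s ih =>
    intro f hmap hinv hne
    rcases s.eq_empty_or_nonempty with rfl | ⟨a, ha⟩
    · simp
    · have hfa : f a ∈ s := hmap a ha
      have hfa' : f a ≠ a := hne a ha
      set t := (s.erase a).erase (f a) with ht
      have htsub : t ⊆ s := (Finset.erase_subset _ _).trans (Finset.erase_subset _ _)
      have hat : a ∉ t := by
        intro hat
        exact (Finset.ne_of_mem_erase (Finset.mem_of_mem_erase hat)) rfl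
      have hts : t ⊂ s := Finset.ssubset_iff_of_subset htsub |>.mpr ⟨a, ha, hat⟩
      have hmem_t : ∀ b, b ∈ t ↔ b ≠ f a ∧ b ≠ a ∧ b ∈ s := by
        intro b
        constructor
        · intro hb
          exact ⟨Finset.ne_of_mem_erase hb,
            Finset.ne_of_mem_erase (Finset.mem_of_mem_erase hb),
            Finset.mem_of_mem_erase (Finset.mem_of_mem_erase hb)⟩
        · rintro ⟨h1, h2, h3⟩
          exact Finset.mem_erase.mpr ⟨h1, Finset.mem_erase.mpr ⟨h2, h3⟩⟩
      have heven : Even t.card := by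
        refine ih t hts f ?_ ?_ ?_
        · intro b hb
          rw [hmem_t] at hb ⊢
          obtain ⟨hb1, hb2, hb3⟩ := hb
          refine ⟨?_, ?_, hmap b hb3⟩
          · intro hcc
            exact hb2 (by rw [← hinv b hb3, hcc, hinv a ha])
          · intro hcc
            exact hb1 (by rw [← hinv b hb3, hcc])
        · intro b hb
          exact hinv b (htsub hb)
        · intro b hb
          exact hne b (htsub hb)
      have hfae : f a ∈ s.erase a := Finset.mem_erase.mpr ⟨hfa', hfa⟩
      have hc1 : (s.erase a).card = s.card - 1 := Finset.card_erase_of_mem ha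
      have hc2 : t.card = (s.erase a).card - 1 := Finset.card_erase_of_mem hfae
      have hpos : 0 < (s.erase a).card := Finset.card_pos.mpr ⟨f a, hfae⟩
      have hpos2 : 0 < s.card := Finset.card_pos.mpr ⟨a, ha⟩
      obtain ⟨r, hr⟩ := heven
      exact ⟨r + 1, by omega⟩

end NotLFAux2

section NotLFAux3
variable {G : Type*} [Group G] [DecidableEq G]

lemma isSFT_XP (T : Finset G) : IsSFT (XP T) := by
  classical
  refine ⟨insert 1 T,
    {w : (insert 1 T : Finset G) → Fin (T.card + 1) | ¬ ∀ u : G, ∀ hu : u ∈ T,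
      w ⟨1, Finset.mem_insert_self 1 T⟩ = pidx T u →
      w ⟨u, Finset.mem_insert_of_mem hu⟩ = pidx T u⁻¹}, ?_⟩
  ext x
  simp only [XP, Set.mem_setOf_eq, restrictF, shift, not_not]
  constructor
  · intro hx g u hu h1
    exact hx g u hu (by simpa using h1)
  · intro hx g u hu h1
    exact hx g u hu (by simpa using h1)

lemma XP_shift (T : Finset G) (g : G) (x : G → Fin (T.card + 1)) (hx : x ∈ XP T) :
    shift g x ∈ XP T := by
  intro g' u hu h1
  have h2 : x (g' * g) = pidx T u := by simpa [shift] using h1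
  have := hx (g' * g) u hu h2
  simpa [shift, mul_assoc] using this

lemma isClosed_XP (T : Finset G) : IsClosed (XP T) := by
  have hXP : XP T = ⋂ (g : G), ⋂ (u : G), ⋂ (_ : u ∈ T),
      {x : G → Fin (T.card + 1) | x g = pidx T u → x (u * g) = pidx T u⁻¹} := by
    ext x; simp [XP]
  rw [hXP]
  refine isClosed_iInter fun g => isClosed_iInter fun u => isClosed_iInter fun hu => ?_
  have hset : {x : G → Fin (T.card + 1) | x g = pidx T u → x (u * g) = pidx T u⁻¹}
      = {x : G → Fin (T.card + 1) | x g = pidx T u}ᶜ ∪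
        {x : G → Fin (T.card + 1) | x (u * g) = pidx T u⁻¹} := by
    ext x
    by_cases hx : x g = pidx T u <;> simp [hx]
  rw [hset]
  have h1 : IsOpen {x : G → Fin (T.card + 1) | x g = pidx T u} := by
    have he : {x : G → Fin (T.card + 1) | x g = pidx T u} =
        (fun x : G → Fin (T.card + 1) => x g) ⁻¹' {pidx T u} := rfl
    rw [he]
    exact (isOpen_discrete _).preimage (continuous_apply g)
  have h2 : IsClosed {x : G → Fin (T.card + 1) | x (u * g) = pidx T u⁻¹} := by
    have he : {x : G → Fin (T.card + 1) | x (u * g) = pidx T u⁻¹} =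
        (fun x : G → Fin (T.card + 1) => x (u * g)) ⁻¹' {pidx T u⁻¹} := rfl
    rw [he]
    exact (isClosed_discrete _).preimage (continuous_apply (u * g))
  exact h1.isClosed_compl.union h2

end NotLFAux3


/-- Over a group that is not locally finite, there exists a sofic `G`-shift
(a factor of a `G`-SFT) which is not a `G`-SFT. -/
theorem exists_sofic_not_SFT [Group G] (hLF : ¬ IsLocallyFinite G) :
    ∃ (m : ℕ) (X : Set (G → Fin (m + 1))) (Y : Set (G → Fin 2))
      (phi : (G → Fin (m + 1)) → (G → Fin 2)),
      IsSFT X ∧ IsShiftSpace Y ∧ ContinuousOn phi X ∧ phi '' X = Y ∧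
      (∀ g : G, ∀ x ∈ X, phi (shift g x) = shift g (phi x)) ∧
      ¬ IsSFT Y := by
  classical
  rw [IsLocallyFinite] at hLF
  push_neg at hLF
  obtain ⟨S0, hS0⟩ := hLF
  set T : Finset G := (S0 ∪ S0⁻¹).erase 1 with hT
  have h1T : (1 : G) ∉ T := Finset.notMem_erase _ _
  have hsym : ∀ t ∈ T, t⁻¹ ∈ T := by
    intro t ht
    rw [hT, Finset.mem_erase, Finset.mem_union] at ht
    obtain ⟨ht1, ht2⟩ := ht
    rw [hT, Finset.mem_erase, Finset.mem_union]
    refine ⟨by simpa using ht1, ?_⟩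
    rcases ht2 with h | h
    · exact Or.inr (Finset.inv_mem_inv h)
    · exact Or.inl (by simpa using Finset.inv_mem_inv h)
  have hclT : Subgroup.closure ((T : Finset G) : Set G) = Subgroup.closure (S0 : Set G) := by
    apply le_antisymm
    · rw [Subgroup.closure_le]
      intro t ht
      simp only [hT, Finset.coe_erase, Set.mem_diff, Finset.coe_union, Set.mem_union,
        Finset.mem_coe, Set.mem_singleton_iff] at ht
      rcases ht.1 with h | h
      · exact Subgroup.subset_closure h
      · have h2 : t⁻¹ ∈ (S0 : Set G) := by
          have := Finset.inv_mem_inv h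
          simpa using this
        have h3 : t⁻¹ ∈ Subgroup.closure (S0 : Set G) := Subgroup.subset_closure h2
        simpa using (Subgroup.closure (S0 : Set G)).inv_mem h3
    · rw [Subgroup.closure_le]
      intro s hs
      by_cases hs1 : s = (1 : G)
      · simp [hs1, Subgroup.one_mem]
      · apply Subgroup.subset_closure
        simp only [hT, Finset.coe_erase, Set.mem_diff, Finset.coe_union, Set.mem_union,
          Finset.mem_coe, Set.mem_singleton_iff]
        exact ⟨Or.inl hs, hs1⟩
  have hinf : ¬ Finite ↥(Subgroup.closure ((T : Finset G) : Set G)) := by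
    rw [hclT]; exact not_finite_iff_infinite.mpr hS0
  have hcont : Continuous (fun x : G → Fin (T.card + 1) => (toTwo ∘ x : G → Fin 2)) := by
    refine continuous_pi fun g => ?_
    exact Continuous.comp continuous_of_discreteTopology (continuous_apply g)
  refine ⟨T.card, XP T, (fun x : G → Fin (T.card + 1) => (toTwo ∘ x : G → Fin 2)) '' XP T,
    fun x => toTwo ∘ x, isSFT_XP T, ⟨?_, ?_⟩, hcont.continuousOn, rfl, ?_, ?_⟩
  · exact (((isClosed_XP T).isCompact).image hcont).isClosed
  · rintro g y ⟨x, hx, rfl⟩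
    exact ⟨shift g x, XP_shift T g x hx, rfl⟩
  · intro g x _
    rfl
  · rintro ⟨F, P, hYP⟩
    set D : Finset G := F * F⁻¹ with hD
    have hr : ∀ d : G, ∃ r, d ∈ Subgroup.closure ((T : Finset G) : Set G) → d ∈ tball T r := by
      intro d
      by_cases hd : d ∈ Subgroup.closure ((T : Finset G) : Set G)
      · obtain ⟨r, hrr⟩ := exists_tball_of_mem_closure hsym hd
        exact ⟨r, fun _ => hrr⟩
      · exact ⟨0, fun h => absurd h hd⟩
    choose rf hrf using hr
    set R := D.sup rf with hR
    have hRmem : ∀ d ∈ D, d ∈ Subgroup.closure ((T : Finset G) : Set G) → d ∈ tball T R :=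
      fun d hd hdc => tball_mono T (Finset.le_sup hd) (hrf d hdc)
    set N := 2 * R + 1 + 1 with hN
    have hNeven : Even N := ⟨R + 1, by omega⟩
    obtain ⟨hh, hh1, hh0⟩ := exists_fresh hsym hinf (2 * R + 1)
    obtain ⟨γ, hγ0, hγN, hstep, hmem, hnot⟩ := exists_path (2 * R + 1) hh hh1 hh0
    have hγN' : γ N = hh := hγN
    have hstepN : ∀ k < N, ∃ t ∈ T, γ (k + 1) = t * γ k := hstep
    have hmemN : ∀ k ≤ N, γ k ∈ tball T k := hmem
    have key : ∀ j k : ℕ, j < k → k ≤ N → γ j ≠ γ k := by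
      intro j k hjk hk heq
      have h1 : γ k ∉ tball T (k - 1) := hnot k (by omega) hk
      have h2 : γ j ∈ tball T j := hmemN j (by omega)
      exact h1 (heq ▸ tball_mono T (by omega : j ≤ k - 1) h2)
    have hinj : ∀ j ≤ N, ∀ k ≤ N, γ j = γ k → j = k := by
      intro j hj k hk he
      rcases lt_trichotomy j k with h | h | h
      · exact absurd he (key j k h hk)
      · exact h
      · exact absurd he.symm (key k j h hj)
    set xstar : G → Fin 2 := fun g => if ∃ k, k ≤ N ∧ γ k = g then 1 else 0 with hxs
    have hxstarval : ∀ g, xstar g = if ∃ k, k ≤ N ∧ γ k = g then 1 else 0 := fun _ => rfl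
    have hγNball : γ N ∉ tball T (2 * R + 1) := by rw [hγN']; exact hh0
    have hγNcl : γ N ∈ Subgroup.closure ((T : Finset G) : Set G) :=
      tball_subset_closure T N (hmemN N le_rfl)
    have hmemY : xstar ∈ (fun x : G → Fin (T.card + 1) => (toTwo ∘ x : G → Fin 2)) '' XP T := by
      rw [hYP]
      intro g
      by_cases hA : ∃ f ∈ F, f * g = γ N
      · obtain ⟨f2, hf2, hf2e⟩ := hA
        have hB : ∀ f ∈ F, f * g ≠ γ 0 := by
          intro f1 hf1 hf1e
          have h1 : f1 * g = 1 := hf1e.trans hγ0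
          have hgeq : g = f1⁻¹ := by
            have h2 := congrArg (fun z => f1⁻¹ * z) h1
            simpa using h2
          have hDmem : γ N ∈ D := by
            have he : γ N = f2 * f1⁻¹ := by rw [← hf2e, hgeq]
            rw [he, hD]
            exact Finset.mul_mem_mul hf2 (Finset.inv_mem_inv hf1)
          exact hγNball (tball_mono T (by omega : R ≤ 2 * R + 1) (hRmem _ hDmem hγNcl))
        set δ : ℕ → G := fun k => γ (N - k) with hδ
        have hδval : ∀ k, δ k = γ (N - k) := fun _ => rfl
        have hinjδ : ∀ j ≤ N, ∀ k ≤ N, δ j = δ k → j = k := by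
          intro j hj k hk he
          have := hinj (N - j) (by omega) (N - k) (by omega) he
          omega
        have hstepδ : ∀ k < N, ∃ t ∈ T, δ (k + 1) = t * δ k := by
          intro k hk
          obtain ⟨t, ht, he⟩ := hstepN (N - k - 1) (by omega)
          refine ⟨t⁻¹, hsym t ht, ?_⟩
          have h1 : δ k = γ (N - k - 1 + 1) := by
            rw [hδval]
            congr 1
            omega
          have h2 : δ (k + 1) = γ (N - k - 1) := by
            rw [hδval, Nat.sub_sub]
          rw [h2, h1, he]
          rw [inv_mul_cancel_left]
        obtain ⟨x0, hx0, hx0v⟩ := cover_lemma T hsym N hNeven δ hinjδ hstepδ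
        have hy0 : (toTwo ∘ x0 : G → Fin 2) ∈
            (fun x : G → Fin (T.card + 1) => (toTwo ∘ x : G → Fin 2)) '' XP T :=
          Set.mem_image_of_mem _ hx0
        rw [hYP] at hy0
        have heqw : restrictF F (shift g xstar) = restrictF F (shift g (toTwo ∘ x0)) := by
          funext f
          simp only [restrictF, shift, Function.comp_apply]
          rw [hx0v ((f : G) * g), hxstarval ((f : G) * g)]
          by_cases h1 : ∃ k, k ≤ N ∧ γ k = (f : G) * g
          · obtain ⟨k, hk, he⟩ := h1
            have hk0 : k ≠ 0 := by
              intro h0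
              exact hB f f.2 (by rw [← he, h0])
            have hwit : ∃ k', k' < N ∧ δ k' = (f : G) * g := by
              refine ⟨N - k, by omega, ?_⟩
              rw [hδval, show N - (N - k) = k by omega]
              exact he
            rw [if_pos ⟨k, hk, he⟩, if_pos hwit]
          · have h2 : ¬ ∃ k', k' < N ∧ δ k' = (f : G) * g := by
              rintro ⟨k', hk', he'⟩
              exact h1 ⟨N - k', by omega, he'⟩
            rw [if_neg h1, if_neg h2]
        rw [heqw]
        exact hy0 g
      · obtain ⟨x0, hx0, hx0v⟩ := cover_lemma T hsym N hNeven γ hinj (fun k hk => hstepN k hk)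
        have hy0 : (toTwo ∘ x0 : G → Fin 2) ∈
            (fun x : G → Fin (T.card + 1) => (toTwo ∘ x : G → Fin 2)) '' XP T :=
          Set.mem_image_of_mem _ hx0
        rw [hYP] at hy0
        have heqw : restrictF F (shift g xstar) = restrictF F (shift g (toTwo ∘ x0)) := by
          funext f
          simp only [restrictF, shift, Function.comp_apply]
          rw [hx0v ((f : G) * g), hxstarval ((f : G) * g)]
          by_cases h1 : ∃ k, k ≤ N ∧ γ k = (f : G) * g
          · obtain ⟨k, hk, he⟩ := h1
            have hkN : k ≠ N := by
              intro hcc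
              exact hA ⟨f, f.2, by rw [← hcc]; exact he.symm⟩
            rw [if_pos ⟨k, hk, he⟩, if_pos ⟨k, by omega, he⟩]
          · have h2 : ¬ ∃ k, k < N ∧ γ k = (f : G) * g := by
              rintro ⟨k, hk, he⟩
              exact h1 ⟨k, by omega, he⟩
            rw [if_neg h1, if_neg h2]
        rw [heqw]
        exact hy0 g
    have hnotY : xstar ∉ (fun x : G → Fin (T.card + 1) => (toTwo ∘ x : G → Fin 2)) '' XP T := by
      rintro ⟨x0, hx0, hx0e⟩
      set Bf : Finset G := (Finset.range (N + 1)).image γ with hBf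
      have hmemBf : ∀ b, b ∈ Bf ↔ ∃ k, k ≤ N ∧ γ k = b := by
        intro b
        simp only [hBf, Finset.mem_image, Finset.mem_range]
        constructor
        · rintro ⟨k, hk, he⟩; exact ⟨k, by omega, he⟩
        · rintro ⟨k, hk, he⟩; exact ⟨k, by omega, he⟩
      have hcard : Bf.card = N + 1 := by
        rw [hBf, Finset.card_image_of_injOn, Finset.card_range]
        intro j hj k hk he
        have hj' : j ≤ N := by
          have := Finset.mem_range.mp (Finset.mem_coe.mp hj); omega
        have hk' : k ≤ N := by
          have := Finset.mem_range.mp (Finset.mem_coe.mp hk); omega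
        exact hinj j hj' k hk' he
      have hxstar1 : ∀ b ∈ Bf, xstar b = 1 := by
        intro b hb
        rw [hxstarval]
        exact if_pos ((hmemBf b).mp hb)
      have hstep1 : ∀ b ∈ Bf, ∃ u, u ∈ T ∧ x0 b = pidx T u := by
        intro b hb
        have hcb : toTwo (x0 b) = xstar b := congrFun hx0e b
        have h1 : toTwo (x0 b) = 1 := by rw [hcb]; exact hxstar1 b hb
        have h3 : x0 b ≠ 0 := by
          intro hc
          rw [hc] at h1
          simp [toTwo] at h1
        obtain ⟨u, hu, hue⟩ := exists_pidx_eq h3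
        exact ⟨u, hu, hue.symm⟩
      set fI : G → G := fun b => if h : ∃ u, u ∈ T ∧ x0 b = pidx T u then h.choose * b else b
        with hfI
      have hprops : ∀ b ∈ Bf,
          ∃ u, u ∈ T ∧ x0 b = pidx T u ∧ fI b = u * b ∧ x0 (u * b) = pidx T u⁻¹ := by
        intro b hb
        obtain ⟨u, hu, hux⟩ := hstep1 b hb
        have hex : ∃ u, u ∈ T ∧ x0 b = pidx T u := ⟨u, hu, hux⟩
        have huu : hex.choose = u :=
          pidx_injOn hex.choose_spec.1 hu (hex.choose_spec.2.symm.trans hux)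
        refine ⟨u, hu, hux, ?_, hx0 b u hu hux⟩
        rw [hfI]
        simp only [dif_pos hex]
        rw [huu]
      have hmemf : ∀ b ∈ Bf, fI b ∈ Bf := by
        intro b hb
        obtain ⟨u, hu, _, hfb, hxp⟩ := hprops b hb
        have h1 : toTwo (x0 (u * b)) = 1 := by
          rw [hxp]
          simp [toTwo, pidx_ne_zero (hsym u hu)]
        have h2 : xstar (u * b) = 1 := by
          rw [← congrFun hx0e (u * b)]
          exact h1
        rw [hxstarval] at h2
        by_cases hc : ∃ k, k ≤ N ∧ γ k = u * b
        · rw [hfb]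
          exact (hmemBf _).mpr hc
        · rw [if_neg hc] at h2
          exact absurd h2 (by decide)
      have hinvol : ∀ b ∈ Bf, fI (fI b) = b := by
        intro b hb
        obtain ⟨u, hu, hux, hfb, hxp⟩ := hprops b hb
        obtain ⟨v, hv, hvx, hfb2, _⟩ := hprops (fI b) (hmemf b hb)
        have hveq : v = u⁻¹ := by
          apply pidx_injOn hv (hsym u hu)
          rw [← hvx, hfb]
          exact hxp
        rw [hfb2, hveq, hfb, inv_mul_cancel_left]
      have hnefix : ∀ b ∈ Bf, fI b ≠ b := by
        intro b hb
        obtain ⟨u, hu, _, hfb, _⟩ := hprops b hb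
        rw [hfb]
        intro hcc
        have hu1 : u = 1 := by
          have := congrArg (fun z => z * b⁻¹) hcc
          simpa using this
        exact h1T (hu1 ▸ hu)
      have heven := even_card_of_involution Bf fI hmemf hinvol hnefix
      rw [hcard] at heven
      rcases heven with ⟨r, hr⟩
      omega
    exact hnotY hmemY


end LFPaper
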